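/- Let Φ be a positive, trace-preserving super-operator from m×m matrices to w×w matrices, and define the super-operator Φ_TA from m×m matrices to (w+1)×(w+1) matrices by letting Φ_TA[X] have Φ[X] as its top-left w×w block, the scalar −Tr(X) in the bottom-right corner entry, and zeros elsewhere. Then Φ_TA is Hermiticity-preserving and trace-annihilating, and for every bipartite state τ on ℂ^m ⊗ ℂ^n it holds that ‖(Φ_TA ⊗ id_n)[τ]‖_tr = 1 + ‖(Φ ⊗ id_n)[τ]‖_tr. -/

import Mathlib

open scoped Kronecker ComplexOrder Matrix

namespace ChannelDiscrimination

/-- The trace norm `Tr √(Aᴴ A)` of a complex square matrix. -/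
noncomputable def traceNorm {ι : Type*} [Fintype ι] [DecidableEq ι]
    (A : Matrix ι ι ℂ) : ℝ :=
  ((Matrix.posSemidef_conjTranspose_mul_self A).1.eigenvectorUnitary.1 *
      Matrix.diagonal (fun i => ((√((Matrix.posSemidef_conjTranspose_mul_self A).1.eigenvalues i) : ℝ) : ℂ)) *
      (star (Matrix.posSemidef_conjTranspose_mul_self A).1.eigenvectorUnitary :
        Matrix ι ι ℂ)).trace.re

/-- A state: a positive semidefinite matrix of trace one. -/
def IsState {ι : Type*} [Fintype ι] (ρ : Matrix ι ι ℂ) : Prop :=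
  ρ.PosSemidef ∧ ρ.trace = 1

/-- Separability of a bipartite matrix on `ℂ^m ⊗ ℂ^n`. -/
def IsSeparable {m n : ℕ} (σ : Matrix (Fin m × Fin n) (Fin m × Fin n) ℂ) : Prop :=
  ∃ (N : ℕ) (p : Fin N → ℝ) (ρ : Fin N → Matrix (Fin m) (Fin m) ℂ)
    (τ : Fin N → Matrix (Fin n) (Fin n) ℂ),
    (∀ i, 0 ≤ p i) ∧ (∑ i, p i = 1) ∧ (∀ i, IsState (ρ i)) ∧ (∀ i, IsState (τ i)) ∧
    σ = ∑ i, (p i : ℂ) • (ρ i ⊗ₖ τ i)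

/-- `Φ ⊗ id_n` for a super-operator `Φ` from `m×m` to `k×k` matrices. -/
def tensorId {m k : ℕ} (n : ℕ)
    (Φ : Matrix (Fin m) (Fin m) ℂ →ₗ[ℂ] Matrix (Fin k) (Fin k) ℂ) :
    Matrix (Fin m × Fin n) (Fin m × Fin n) ℂ →ₗ[ℂ]
      Matrix (Fin k × Fin n) (Fin k × Fin n) ℂ where
  toFun M := Matrix.of fun p q => Φ (Matrix.of fun i j => M (i, p.2) (j, q.2)) p.1 q.1
  map_add' M N := by
    ext p q
    show Φ ((Matrix.of fun i j => M (i, p.2) (j, q.2)) +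
        (Matrix.of fun i j => N (i, p.2) (j, q.2))) p.1 q.1 = _
    rw [map_add]
    rfl
  map_smul' c M := by
    ext p q
    show Φ (c • (Matrix.of fun i j => M (i, p.2) (j, q.2))) p.1 q.1 = _
    rw [map_smul]
    rfl

/-- A positive super-operator. -/
def IsPositiveMap {m k : ℕ}
    (Φ : Matrix (Fin m) (Fin m) ℂ →ₗ[ℂ] Matrix (Fin k) (Fin k) ℂ) : Prop :=
  ∀ X : Matrix (Fin m) (Fin m) ℂ, X.PosSemidef → (Φ X).PosSemidef

/-- A trace-preserving super-operator. -/
def IsTracePreserving {m k : ℕ}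
    (Φ : Matrix (Fin m) (Fin m) ℂ →ₗ[ℂ] Matrix (Fin k) (Fin k) ℂ) : Prop :=
  ∀ X : Matrix (Fin m) (Fin m) ℂ, (Φ X).trace = X.trace

/-- A completely positive super-operator: `Φ ⊗ id_n` is positive for every `n`. -/
def IsCompletelyPositive {m k : ℕ}
    (Φ : Matrix (Fin m) (Fin m) ℂ →ₗ[ℂ] Matrix (Fin k) (Fin k) ℂ) : Prop :=
  ∀ (n : ℕ) (M : Matrix (Fin m × Fin n) (Fin m × Fin n) ℂ),
    M.PosSemidef → (tensorId n Φ M).PosSemidef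

/-- A (quantum) channel: completely positive and trace-preserving. -/
def IsChannel {m k : ℕ}
    (Φ : Matrix (Fin m) (Fin m) ℂ →ₗ[ℂ] Matrix (Fin k) (Fin k) ℂ) : Prop :=
  IsCompletelyPositive Φ ∧ IsTracePreserving Φ

/-- An entanglement-breaking channel. -/
def IsEntanglementBreaking {m k : ℕ}
    (Φ : Matrix (Fin m) (Fin m) ℂ →ₗ[ℂ] Matrix (Fin k) (Fin k) ℂ) : Prop :=
  IsChannel Φ ∧ ∀ (n : ℕ) (ρ : Matrix (Fin m × Fin n) (Fin m × Fin n) ℂ),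
    IsState ρ → IsSeparable (tensorId n Φ ρ)

/-- `pad1 M c` is the `(k+1)×(k+1)` matrix with `M` as its top-left `k×k` block,
`c` in the bottom-right corner, and zeros elsewhere. -/
def pad1 {k : ℕ} (M : Matrix (Fin k) (Fin k) ℂ) (c : ℂ) :
    Matrix (Fin (k + 1)) (Fin (k + 1)) ℂ :=
  Matrix.of fun a b =>
    Fin.lastCases (Fin.lastCases c (fun _ => 0) b)
      (fun i => Fin.lastCases 0 (fun j => M i j) b) a

/-- Partial transpose on the first tensor factor. -/
def ptransposeFst {d n : ℕ} (ρ : Matrix (Fin d × Fin n) (Fin d × Fin n) ℂ) :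
    Matrix (Fin d × Fin n) (Fin d × Fin n) ℂ :=
  Matrix.of fun p q => ρ (q.1, p.2) (p.1, q.2)


section Aux

open Matrix

-- ## Trace norm basics

lemma aux_trace_submatrix_equiv {ι κ : Type*} [Fintype ι] [Fintype κ]
    (M : Matrix ι ι ℂ) (e : κ ≃ ι) : (M.submatrix e e).trace = M.trace := by
  unfold Matrix.trace
  simp only [Matrix.diag, Matrix.submatrix_apply]
  exact e.sum_comp (fun i => M i i)

lemma aux_traceNorm_charpoly {ι : Type*} [Fintype ι] [DecidableEq ι]
    (A : Matrix ι ι ℂ) :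
    traceNorm A = (((Aᴴ * A).charpoly.roots).map (fun z : ℂ => √z.re)).sum := by
  have hH := (Matrix.posSemidef_conjTranspose_mul_self A).1
  unfold traceNorm
  rw [hH.roots_charpoly_eq_eigenvalues, Multiset.map_map, Matrix.trace_mul_cycle]
  simp [Matrix.trace_diagonal, Function.comp_def]

lemma aux_traceNorm_eq_of {ι : Type*} [Fintype ι] [DecidableEq ι]
    (A B : Matrix ι ι ℂ) (h : Aᴴ * A = Bᴴ * B) : traceNorm A = traceNorm B := by
  rw [aux_traceNorm_charpoly, aux_traceNorm_charpoly, h]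

lemma aux_traceNorm_neg {ι : Type*} [Fintype ι] [DecidableEq ι]
    (A : Matrix ι ι ℂ) : traceNorm (-A) = traceNorm A :=
  aux_traceNorm_eq_of _ _ (by simp)

lemma aux_traceNorm_posSemidef {ι : Type*} [Fintype ι] [DecidableEq ι]
    {A : Matrix ι ι ℂ} (hA : A.PosSemidef) : traceNorm A = A.trace.re := by
  have hH := (Matrix.posSemidef_conjTranspose_mul_self A).1
  have h1 : traceNorm A = (cfc Real.sqrt (Aᴴ * A)).trace.re := by
    rw [hH.cfc_eq]; rfl
  have hsa : IsSelfAdjoint A := hA.1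
  have h2 : Aᴴ * A = A ^ 2 := by rw [hA.1.eq, pow_two]
  rw [h1, h2, ← cfc_comp_pow Real.sqrt 2 A (ha := hsa)]
  have h3 : cfc (fun x : ℝ => √(x ^ 2)) A = cfc (fun x : ℝ => x) A := by
    refine cfc_congr fun x hx => ?_
    rw [hA.1.spectrum_real_eq_range_eigenvalues] at hx
    obtain ⟨i, rfl⟩ := hx
    exact Real.sqrt_sq (hA.eigenvalues_nonneg i)
  rw [h3, show cfc (fun x : ℝ => x) A = A from cfc_id ℝ A hsa]

lemma aux_traceNorm_submatrix_equiv {ι κ : Type*} [Fintype ι] [Fintype κ]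
    [DecidableEq ι] [DecidableEq κ]
    (M : Matrix ι ι ℂ) (e : κ ≃ ι) : traceNorm (M.submatrix e e) = traceNorm M := by
  have h1 : (M.submatrix e e)ᴴ * (M.submatrix e e) = (Mᴴ * M).submatrix e e := by
    rw [conjTranspose_submatrix, submatrix_mul_equiv]
  have h2 : ((Mᴴ * M).submatrix e e).charpoly = (Mᴴ * M).charpoly := by
    simpa using Matrix.charpoly_reindex e.symm (Mᴴ * M)
  rw [aux_traceNorm_charpoly, aux_traceNorm_charpoly, h1, h2]

lemma aux_posSemidef_fromBlocks {ι κ : Type*} [Fintype ι] [Fintype κ]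
    {A : Matrix ι ι ℂ} {D : Matrix κ κ ℂ} (hA : A.PosSemidef) (hD : D.PosSemidef) :
    (Matrix.fromBlocks A 0 0 D).PosSemidef := by
  refine Matrix.PosSemidef.of_dotProduct_mulVec_nonneg ?_ ?_
  · unfold Matrix.IsHermitian
    rw [fromBlocks_conjTranspose, hA.1.eq, hD.1.eq]
    simp
  · intro x
    rw [fromBlocks_mulVec]
    have : dotProduct (star x)
        (Sum.elim (A *ᵥ (x ∘ Sum.inl) + (0 : Matrix ι κ ℂ) *ᵥ (x ∘ Sum.inr))
        ((0 : Matrix κ ι ℂ) *ᵥ (x ∘ Sum.inl) + D *ᵥ (x ∘ Sum.inr)))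
        = dotProduct (star (x ∘ Sum.inl)) (A *ᵥ (x ∘ Sum.inl))
          + dotProduct (star (x ∘ Sum.inr)) (D *ᵥ (x ∘ Sum.inr)) := by
      simp [dotProduct, Fintype.sum_sum_type]
    rw [this]
    exact add_nonneg (hA.dotProduct_mulVec_nonneg _) (hD.dotProduct_mulVec_nonneg _)

lemma aux_trace_fromBlocks {ι κ : Type*} [Fintype ι] [Fintype κ]
    (A : Matrix ι ι ℂ) (B : Matrix ι κ ℂ) (C : Matrix κ ι ℂ) (D : Matrix κ κ ℂ) :
    (Matrix.fromBlocks A B C D).trace = A.trace + D.trace := by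
  unfold Matrix.trace
  simp [Fintype.sum_sum_type, Matrix.diag]

lemma aux_traceNorm_fromBlocks {ι κ : Type*} [Fintype ι] [Fintype κ]
    [DecidableEq ι] [DecidableEq κ]
    (A : Matrix ι ι ℂ) (D : Matrix κ κ ℂ) :
    traceNorm (Matrix.fromBlocks A 0 0 D) = traceNorm A + traceNorm D := by
  have hA := Matrix.posSemidef_conjTranspose_mul_self A
  have hD := Matrix.posSemidef_conjTranspose_mul_self D
  have h1 : (Matrix.fromBlocks A 0 0 D)ᴴ * (Matrix.fromBlocks A 0 0 D)
      = Matrix.fromBlocks (Aᴴ * A) 0 0 (Dᴴ * D) := by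
    rw [fromBlocks_conjTranspose, fromBlocks_multiply]
    simp
  rw [aux_traceNorm_charpoly, aux_traceNorm_charpoly, aux_traceNorm_charpoly, h1,
    charpoly_fromBlocks_zero₁₂, Polynomial.roots_mul (mul_ne_zero (charpoly_monic _).ne_zero
      (charpoly_monic _).ne_zero), Multiset.map_add, Multiset.sum_add]

-- ## Positive maps preserve adjoints

lemma aux_herm_quad_real {ι : Type*} [Fintype ι] {H : Matrix ι ι ℂ} (hH : H.IsHermitian)
    (x : ι → ℂ) : (dotProduct (star x) (H *ᵥ x)).im = 0 := by
  have h : (starRingEnd ℂ) (dotProduct (star x) (H *ᵥ x)) = dotProduct (star x) (H *ᵥ x) := by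
    simp only [dotProduct, mulVec, dotProduct, map_sum, Pi.star_apply,
      Complex.star_def, Finset.mul_sum]
    rw [Finset.sum_comm]
    refine Finset.sum_congr rfl fun i _ => Finset.sum_congr rfl fun j _ => ?_
    have hherm := hH.apply i j
    rw [Complex.star_def] at hherm
    rw [← hherm]
    simp only [_root_.map_mul, Complex.conj_conj]
    ring
  have := congrArg Complex.im h
  simp only [Complex.conj_im] at this
  linarith

lemma aux_quad_abs_bound {ι : Type*} [Fintype ι] (H : Matrix ι ι ℂ) (x : ι → ℂ) :
    ‖dotProduct (star x) (H *ᵥ x)‖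
      ≤ (∑ i, ∑ j, ‖H i j‖) * (∑ i, ‖x i‖ ^ 2) := by
  set S := ∑ i, ‖x i‖ ^ 2 with hS
  have hterm : ∀ i j, ‖x i‖ * ‖x j‖ ≤ S := by
    intro i j
    have h1 : ‖x i‖ * ‖x j‖
        ≤ max (‖x i‖) (‖x j‖) ^ 2 := by
      rcases le_total (‖x i‖) (‖x j‖) with h | h
      · rw [max_eq_right h, pow_two]
        exact mul_le_mul_of_nonneg_right h (norm_nonneg _)
      · rw [max_eq_left h, pow_two]
        exact mul_le_mul_of_nonneg_left h (norm_nonneg _)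
    refine h1.trans ?_
    rcases le_total (‖x i‖) (‖x j‖) with h | h
    · rw [max_eq_right h]
      exact Finset.single_le_sum (f := fun k => ‖x k‖ ^ 2)
        (fun k _ => by positivity) (Finset.mem_univ j)
    · rw [max_eq_left h]
      exact Finset.single_le_sum (f := fun k => ‖x k‖ ^ 2)
        (fun k _ => by positivity) (Finset.mem_univ i)
  calc ‖dotProduct (star x) (H *ᵥ x)‖
      ≤ ∑ i, ‖star x i * (H *ᵥ x) i‖ := norm_sum_le _ _
    _ ≤ ∑ i, ∑ j, ‖H i j‖ * S := by
        refine Finset.sum_le_sum fun i _ => ?_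
        rw [norm_mul]
        calc ‖star x i‖ * ‖(H *ᵥ x) i‖
            ≤ ‖x i‖ * ∑ j, ‖H i j * x j‖ := by
              rw [Pi.star_apply, Complex.star_def, Complex.norm_conj]
              exact mul_le_mul_of_nonneg_left (norm_sum_le _ _)
                (norm_nonneg _)
          _ = ∑ j, ‖x i‖ * (‖H i j‖ * ‖x j‖) := by
              rw [Finset.mul_sum]
              exact Finset.sum_congr rfl fun j _ => by rw [norm_mul]
          _ ≤ ∑ j, ‖H i j‖ * S := by
              refine Finset.sum_le_sum fun j _ => ?_
              rw [show ‖x i‖ * (‖H i j‖ * ‖x j‖)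
                  = ‖H i j‖ * (‖x i‖ * ‖x j‖) by ring]
              exact mul_le_mul_of_nonneg_left (hterm i j) (norm_nonneg _)
    _ = (∑ i, ∑ j, ‖H i j‖) * S := by simp [Finset.sum_mul]

lemma aux_herm_decomp {ι : Type*} [Fintype ι] [DecidableEq ι] {H : Matrix ι ι ℂ}
    (hH : H.IsHermitian) :
    ∃ P Q : Matrix ι ι ℂ, P.PosSemidef ∧ Q.PosSemidef ∧ H = P - Q := by
  set c : ℝ := ∑ i, ∑ j, ‖H i j‖ with hc
  have hcnn : 0 ≤ c := Finset.sum_nonneg fun i _ => Finset.sum_nonneg fun j _ =>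
    norm_nonneg _
  have hsmul : ((c : ℂ) • (1 : Matrix ι ι ℂ)).PosSemidef := by
    refine Matrix.PosSemidef.of_dotProduct_mulVec_nonneg ?_ ?_
    · rw [Matrix.IsHermitian, conjTranspose_smul]; simp
    · intro x
      rw [smul_mulVec, one_mulVec, dotProduct_smul]
      have h1 := dotProduct_star_self_nonneg x
      have h0 : (0:ℂ) ≤ (c:ℂ) := by rw [Complex.le_def]; simp [hcnn]
      calc (0:ℂ) = (c:ℂ) * 0 := by ring
        _ ≤ (c:ℂ) * dotProduct (star x) x := mul_le_mul_of_nonneg_left h1 h0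
  refine ⟨H + (c : ℂ) • 1, (c : ℂ) • 1, Matrix.PosSemidef.of_dotProduct_mulVec_nonneg ?_ ?_, hsmul, (add_sub_cancel_right _ _).symm⟩
  · rw [Matrix.IsHermitian, conjTranspose_add, hH.eq, conjTranspose_smul]
    simp
  · intro x
    rw [add_mulVec, dotProduct_add, smul_mulVec, one_mulVec, dotProduct_smul]
    set S := ∑ i, ‖x i‖ ^ 2 with hSdef
    have hSnn : 0 ≤ S := Finset.sum_nonneg fun i _ => by positivity
    have hx : dotProduct (star x) x = ((S : ℝ) : ℂ) := by
      simp only [dotProduct, Pi.star_apply, Complex.star_def, hSdef, Complex.ofReal_sum]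
      refine Finset.sum_congr rfl fun i _ => ?_
      rw [mul_comm, Complex.mul_conj, Complex.normSq_eq_norm_sq]
    have him := aux_herm_quad_real hH x
    have habs := aux_quad_abs_bound H x
    rw [hx, Complex.le_def]
    rw [← hc, ← hSdef] at habs
    constructor
    · simp only [Complex.zero_re, Complex.add_re, smul_eq_mul, Complex.mul_re,
        Complex.ofReal_re, Complex.ofReal_im, mul_zero, zero_mul, sub_zero, him]
      have hre : -‖dotProduct (star x) (H *ᵥ x)‖
          ≤ (dotProduct (star x) (H *ᵥ x)).re :=
        neg_le_of_abs_le (Complex.abs_re_le_norm _)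
      linarith
    · simp [him]

lemma aux_posMap_hermitian {m k : ℕ}
    (Φ : Matrix (Fin m) (Fin m) ℂ →ₗ[ℂ] Matrix (Fin k) (Fin k) ℂ)
    (hpos : ∀ X : Matrix (Fin m) (Fin m) ℂ, X.PosSemidef → (Φ X).PosSemidef)
    {H : Matrix (Fin m) (Fin m) ℂ} (hH : H.IsHermitian) : (Φ H).IsHermitian := by
  obtain ⟨P, Q, hP, hQ, hPQ⟩ := aux_herm_decomp hH
  rw [hPQ, map_sub]
  exact ((hpos P hP).1).sub ((hpos Q hQ).1)

lemma aux_posMap_conjTranspose {m k : ℕ}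
    (Φ : Matrix (Fin m) (Fin m) ℂ →ₗ[ℂ] Matrix (Fin k) (Fin k) ℂ)
    (hpos : ∀ X : Matrix (Fin m) (Fin m) ℂ, X.PosSemidef → (Φ X).PosSemidef)
    (X : Matrix (Fin m) (Fin m) ℂ) : Φ Xᴴ = (Φ X)ᴴ := by
  obtain ⟨H, hHdef⟩ : ∃ H : Matrix (Fin m) (Fin m) ℂ, H = (1/2 : ℂ) • (X + Xᴴ) := ⟨_, rfl⟩
  obtain ⟨K, hKdef⟩ : ∃ K : Matrix (Fin m) (Fin m) ℂ, K = (-Complex.I/2 : ℂ) • (X - Xᴴ) :=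
    ⟨_, rfl⟩
  have hH : H.IsHermitian := by
    rw [Matrix.IsHermitian, hHdef, conjTranspose_smul, conjTranspose_add,
      conjTranspose_conjTranspose, show star (1/2:ℂ) = 1/2 from by simp]
    module
  have hK : K.IsHermitian := by
    rw [Matrix.IsHermitian, hKdef, conjTranspose_smul, conjTranspose_sub,
      conjTranspose_conjTranspose,
      show star (-Complex.I/2 : ℂ) = Complex.I/2 from by simp [Complex.ext_iff]]
    module
  have h1 : Complex.I * (-Complex.I/2) = 1/2 := by
    linear_combination (-1/2 : ℂ) * Complex.I_mul_I
  have hX : X = H + Complex.I • K := by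
    rw [hHdef, hKdef, smul_smul, h1]
    module
  have hXh : Xᴴ = H - Complex.I • K := by
    rw [hHdef, hKdef, smul_smul, h1]
    module
  calc Φ Xᴴ = Φ H - Complex.I • Φ K := by rw [hXh, map_sub, _root_.map_smul]
    _ = (Φ X)ᴴ := by
        rw [hX, map_add, _root_.map_smul, conjTranspose_add, conjTranspose_smul,
          (aux_posMap_hermitian Φ hpos hH).eq, (aux_posMap_hermitian Φ hpos hK).eq,
          Complex.star_def, Complex.conj_I, neg_smul, ← sub_eq_add_neg]

-- ## Partial trace

/-- selection matrix -/
def selE {m n : ℕ} (i : Fin m) : Matrix (Fin n) (Fin m × Fin n) ℂ :=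
  Matrix.of fun p jq => if jq = (i, p) then 1 else 0

lemma aux_ptrace_eq_sum {m n : ℕ} (τ : Matrix (Fin m × Fin n) (Fin m × Fin n) ℂ) :
    (Matrix.of fun p q => ∑ i, τ (i, p) (i, q))
      = ∑ i : Fin m, (selE i : Matrix (Fin n) (Fin m × Fin n) ℂ) * τ * (selE i : Matrix (Fin n) (Fin m × Fin n) ℂ)ᴴ := by
  ext p q
  simp only [Matrix.sum_apply]
  rw [Matrix.of_apply]
  refine Finset.sum_congr rfl fun i _ => ?_
  rw [Matrix.mul_apply]
  simp only [Matrix.mul_apply, conjTranspose_apply, selE, of_apply, ite_mul,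
    one_mul, zero_mul, apply_ite (star : ℂ → ℂ), star_one, star_zero, mul_ite, mul_one,
    mul_zero, Finset.sum_ite_eq' Finset.univ, Finset.mem_univ, if_true]

lemma aux_posSemidef_sum {ι κ : Type*} [Fintype κ] [DecidableEq κ] (s : Finset ι)
    (f : ι → Matrix κ κ ℂ) (h : ∀ i ∈ s, (f i).PosSemidef) :
    (∑ i ∈ s, f i).PosSemidef := by
  classical
  induction s using Finset.induction_on with
  | empty => simpa using Matrix.PosSemidef.zero
  | insert _ _ hni ih =>
    rw [Finset.sum_insert hni]
    exact ((h _ (Finset.mem_insert_self _ _)).add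
      (ih fun i hi => h i (Finset.mem_insert_of_mem hi)))

lemma aux_ptrace_posSemidef {m n : ℕ} {τ : Matrix (Fin m × Fin n) (Fin m × Fin n) ℂ}
    (hτ : τ.PosSemidef) :
    (Matrix.of fun p q => ∑ i, τ (i, p) (i, q)).PosSemidef := by
  rw [aux_ptrace_eq_sum]
  exact aux_posSemidef_sum _ _ fun i _ => hτ.mul_mul_conjTranspose_same (selE i)

lemma aux_ptrace_trace {m n : ℕ} (τ : Matrix (Fin m × Fin n) (Fin m × Fin n) ℂ) :
    (Matrix.of fun p q => ∑ i, τ (i, p) (i, q)).trace = τ.trace := by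
  simp only [Matrix.trace, Matrix.diag, of_apply, Fintype.sum_prod_type]
  exact Finset.sum_comm

-- ## pad1 lemmas

lemma pad1_castSucc_castSucc {k : ℕ} (M : Matrix (Fin k) (Fin k) ℂ) (c : ℂ)
    (i j : Fin k) : pad1 M c i.castSucc j.castSucc = M i j := by
  simp [pad1]

lemma pad1_last_last {k : ℕ} (M : Matrix (Fin k) (Fin k) ℂ) (c : ℂ) :
    pad1 M c (Fin.last k) (Fin.last k) = c := by
  simp [pad1]

lemma pad1_castSucc_last {k : ℕ} (M : Matrix (Fin k) (Fin k) ℂ) (c : ℂ) (i : Fin k) :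
    pad1 M c i.castSucc (Fin.last k) = 0 := by
  simp [pad1]

lemma pad1_last_castSucc {k : ℕ} (M : Matrix (Fin k) (Fin k) ℂ) (c : ℂ) (j : Fin k) :
    pad1 M c (Fin.last k) j.castSucc = 0 := by
  simp [pad1]

lemma pad1_conjTranspose {k : ℕ} (M : Matrix (Fin k) (Fin k) ℂ) (c : ℂ) :
    (pad1 M c)ᴴ = pad1 Mᴴ (star c) := by
  ext a b
  rw [conjTranspose_apply]
  induction a using Fin.lastCases with
  | last =>
    induction b using Fin.lastCases with
    | last => rw [pad1_last_last, pad1_last_last]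
    | cast j => rw [pad1_castSucc_last, pad1_last_castSucc, star_zero]
  | cast i =>
    induction b using Fin.lastCases with
    | last => rw [pad1_last_castSucc, pad1_castSucc_last, star_zero]
    | cast j => rw [pad1_castSucc_castSucc, pad1_castSucc_castSucc, conjTranspose_apply]

lemma pad1_trace {k : ℕ} (M : Matrix (Fin k) (Fin k) ℂ) (c : ℂ) :
    (pad1 M c).trace = M.trace + c := by
  unfold Matrix.trace
  rw [show ∑ a, (pad1 M c).diag a = ∑ a : Fin (k+1), pad1 M c a a from rfl,
    Fin.sum_univ_castSucc]
  simp only [pad1_castSucc_castSucc, pad1_last_last]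
  rfl

-- ## the block equivalence

def blockEquiv (w n : ℕ) : (Fin w × Fin n) ⊕ Fin n ≃ Fin (w + 1) × Fin n where
  toFun := Sum.elim (fun ip => (ip.1.castSucc, ip.2)) (fun p => (Fin.last w, p))
  invFun := fun ip => Fin.lastCases (Sum.inr ip.2) (fun i => Sum.inl (i, ip.2)) ip.1
  left_inv := by rintro (⟨i, p⟩ | p) <;> simp
  right_inv := by
    rintro ⟨i, p⟩
    induction i using Fin.lastCases <;> simp

lemma blockEquiv_symm_castSucc {w n : ℕ} (i : Fin w) (p : Fin n) :
    (blockEquiv w n).symm (i.castSucc, p) = Sum.inl (i, p) := by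
  simp [blockEquiv]

lemma blockEquiv_symm_last {w n : ℕ} (p : Fin n) :
    (blockEquiv w n).symm (Fin.last w, p) = Sum.inr p := by
  simp [blockEquiv]

end Aux

/-- From a positive trace-preserving `Φ`, the super-operator
`Φ_TA[X] = pad1 (Φ[X]) (−Tr X)` is Hermiticity-preserving and trace-annihilating,
and for every bipartite state `τ` it holds that
`‖(Φ_TA ⊗ id_n)[τ]‖_tr = 1 + ‖(Φ ⊗ id_n)[τ]‖_tr`. -/
theorem trace_annihilating_map_from_positive_trace_preserving
    {m w : ℕ} (Φ : Matrix (Fin m) (Fin m) ℂ →ₗ[ℂ] Matrix (Fin w) (Fin w) ℂ)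
    (hpos : IsPositiveMap Φ) (hTP : IsTracePreserving Φ)
    (ΦTA : Matrix (Fin m) (Fin m) ℂ →ₗ[ℂ] Matrix (Fin (w + 1)) (Fin (w + 1)) ℂ)
    (hΦTA : ∀ X : Matrix (Fin m) (Fin m) ℂ, ΦTA X = pad1 (Φ X) (-X.trace)) :
    (∀ X : Matrix (Fin m) (Fin m) ℂ, ΦTA Xᴴ = (ΦTA X)ᴴ) ∧
    (∀ X : Matrix (Fin m) (Fin m) ℂ, (ΦTA X).trace = 0) ∧
    ∀ (n : ℕ) (τ : Matrix (Fin m × Fin n) (Fin m × Fin n) ℂ), IsState τ →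
      traceNorm (tensorId n ΦTA τ) = 1 + traceNorm (tensorId n Φ τ) := by
  have hherm : ∀ X : Matrix (Fin m) (Fin m) ℂ, ΦTA Xᴴ = (ΦTA X)ᴴ := by
    intro X
    rw [hΦTA, hΦTA, pad1_conjTranspose, aux_posMap_conjTranspose Φ hpos,
      Matrix.trace_conjTranspose, star_neg]
  refine ⟨hherm, ?_, ?_⟩
  · intro X
    rw [hΦTA, pad1_trace, hTP]
    ring
  · rintro n τ ⟨hpsd, htr⟩
    obtain ⟨σ, hσdef⟩ : ∃ σ : Matrix (Fin n) (Fin n) ℂ,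
        σ = Matrix.of fun p q => ∑ i, τ (i, p) (i, q) := ⟨_, rfl⟩
    have hσpsd : σ.PosSemidef := hσdef ▸ aux_ptrace_posSemidef hpsd
    have hσtr : σ.trace = 1 := by rw [hσdef, aux_ptrace_trace, htr]
    have hblock : tensorId n ΦTA τ
        = (Matrix.fromBlocks (tensorId n Φ τ) 0 0 (-σ)).submatrix
            (blockEquiv w n).symm (blockEquiv w n).symm := by
      ext ⟨a, p⟩ ⟨b, q⟩
      have hL : tensorId n ΦTA τ (a, p) (b, q)
          = ΦTA (Matrix.of fun i j => τ (i, p) (j, q)) a b := rfl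
      have hA : ∀ (i : Fin w) (j : Fin w), tensorId n Φ τ (i, p) (j, q)
          = Φ (Matrix.of fun i j => τ (i, p) (j, q)) i j := fun _ _ => rfl
      have htr' : (Matrix.of fun i j => τ (i, p) (j, q) :
          Matrix (Fin m) (Fin m) ℂ).trace = ∑ i, τ (i, p) (i, q) := rfl
      rw [hL, hΦTA, Matrix.submatrix_apply]
      induction a using Fin.lastCases with
      | last =>
        induction b using Fin.lastCases with
        | last =>
          rw [pad1_last_last, blockEquiv_symm_last, blockEquiv_symm_last]
          rw [Matrix.fromBlocks_apply₂₂, htr', hσdef]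
          simp
        | cast j =>
          rw [pad1_last_castSucc, blockEquiv_symm_last, blockEquiv_symm_castSucc]
          simp
      | cast i =>
        induction b using Fin.lastCases with
        | last =>
          rw [pad1_castSucc_last, blockEquiv_symm_castSucc, blockEquiv_symm_last]
          simp
        | cast j =>
          rw [pad1_castSucc_castSucc, blockEquiv_symm_castSucc, blockEquiv_symm_castSucc,
            Matrix.fromBlocks_apply₁₁, hA]
    rw [hblock, aux_traceNorm_submatrix_equiv, aux_traceNorm_fromBlocks,
      aux_traceNorm_neg, aux_traceNorm_posSemidef hσpsd, hσtr]
    simp [add_comm]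


end ChannelDiscrimination
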